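/- Let A be a consistent layered automaton over a finite alphabet Σ, let q be a leaf state, and let σ and τ be longest suffix resolvers for Eve and Adam in ⟦A⟧, respectively. If an infinite word w is accepted (under layered acceptance) by the layered automaton A with the initial state of T₁ replaced by μ̂₁(q), then every σ-run of ⟦A⟧ over w starting from q satisfies the parity condition. Symmetrically, if w is rejected (under layered acceptance) by A with initial state μ̂₁(q), then every τ-run of ⟦A⟧ over w starting from q fails the parity condition. -/

import Mathlib

open scoped Classical

noncomputable section

/-! ### Infinite words and the parity condition -/

/-- The minimal value occurring infinitely often in a sequence of priorities;
for (eventually) bounded sequences this is the `liminf`. -/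
def minInfOften (pi : ℕ → ℕ) : ℕ := sInf {x : ℕ | ∀ N : ℕ, ∃ n : ℕ, N ≤ n ∧ pi n = x}

/-- The (min-)parity acceptance condition: the liminf of the priorities is even. -/
def ParityAccept (pi : ℕ → ℕ) : Prop := Even (minInfOften pi)

/-- Prepend a finite word to an infinite word. -/
def prependW {α : Type} (u : List α) (w : ℕ → α) : ℕ → α := fun i =>
  if h : i < u.length then u.get ⟨i, h⟩ else w (i - u.length)

/-- The prefix of length `n` of an infinite word, as a list. -/
def wordPrefix {α : Type} (w : ℕ → α) (n : ℕ) : List α := List.ofFn (fun i : Fin n => w i)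

/-- Drop the first `n` letters of an infinite word. -/
def wordDrop {α : Type} (w : ℕ → α) (n : ℕ) : ℕ → α := fun i => w (n + i)

/-- The periodic infinite word `v^ω` (junk if `v = []`). -/
def perWord {α : Type} [Inhabited α] (v : List α) : ℕ → α := fun i => v.getD (i % v.length) default

/-! ### Layered automata -/

/-- A layered automaton over the alphabet `α` with `d` layers.  The (disjoint) layers
are encoded by the function `layer : Q → [1,d]`; each layer is a deterministic
transition system (partial transition function `δ`, which stays inside the layer);
`μ` sends each state of layer `x+1` to its parent in layer `x` (and is the identity
on layer `1`) and is a morphism of transition systems; layer `1` is complete, carries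
the initial state, and all its states are reachable from the initial state. -/
structure Layered (Q α : Type) (d : ℕ) where
  layer : Q → ℕ
  layer_pos : ∀ q, 1 ≤ layer q
  layer_le : ∀ q, layer q ≤ d
  δ : Q → α → Option Q
  δ_layer : ∀ q a q', δ q a = some q' → layer q' = layer q
  μ : Q → Q
  μ_layer : ∀ q, 1 < layer q → layer (μ q) + 1 = layer q
  μ_id : ∀ q, layer q = 1 → μ q = q
  μ_morph : ∀ q a q', 1 < layer q → δ q a = some q' → δ (μ q) a = some (μ q')
  init : Q
  init_layer : layer init = 1
  complete1 : ∀ q a, layer q = 1 → (δ q a).isSome = true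
  reach1 : ∀ q, layer q = 1 →
    Relation.ReflTransGen (fun p p' => layer p = 1 ∧ ∃ a, δ p a = some p') init q

namespace Layered

variable {Q R α : Type} {d d' : ℕ}

/-- The run of the (deterministic) layer transition systems on a finite word. -/
def runList (A : Layered Q α d) : Q → List α → Option Q
  | q, [] => some q
  | q, a :: u =>
    match A.δ q a with
    | some q' => runList A q' u
    | none => none

/-- `μ̂_x q`: the ancestor of `q` in layer `x` (image under the composed morphisms). -/
def muHat (A : Layered Q α d) (x : ℕ) (q : Q) : Q := (A.μ)^[A.layer q - x] q

/-- A leaf state: a state that is not in the image of any of the morphisms `μ_x`. -/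
def IsLeaf (A : Layered Q α d) (q : Q) : Prop := ∀ p, 1 < A.layer p → A.μ p ≠ q

/-- `layer(q,a)`: the largest layer `x ≤ layer q` in which `δ_x (μ̂_x q) a` is defined. -/
def layerOf (A : Layered Q α d) (q : Q) (a : α) : ℕ :=
  Nat.findGreatest (fun x => (A.δ (A.muHat x q) a).isSome = true) (A.layer q)

/-- A state `p` is an ancestor of `q`. -/
def IsAncestor (A : Layered Q α d) (p q : Q) : Prop :=
  A.layer p ≤ A.layer q ∧ A.muHat (A.layer p) q = p

/-! #### Safe languages and strong acceptance -/

/-- Membership of a finite word in the `x`-safe language of `q`. -/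
def SafeFin (A : Layered Q α d) (x : ℕ) (q : Q) (u : List α) : Prop :=
  (A.runList (A.muHat x q) u).isSome = true

/-- Membership of an infinite word in the `x`-safe language of `q`. -/
def SafeInf (A : Layered Q α d) (x : ℕ) (q : Q) (w : ℕ → α) : Prop :=
  ∀ n : ℕ, A.SafeFin x q (wordPrefix w n)

/-- `w` is strongly accepted by the state `p` (which lies in the even layer `x = layer p`):
`w` is `x`-safe from `p` and no decomposition `w = u·w'` admits a state `p'` of layer `x+1`
with a `u`-run from `p` to the parent of `p'` in `T_x` such that `w'` is `(x+1)`-safe from `p'`. -/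
def StronglyAcc (A : Layered Q α d) (p : Q) (w : ℕ → α) : Prop :=
  Even (A.layer p) ∧ A.SafeInf (A.layer p) p w ∧
  ∀ (n : ℕ) (p' : Q), A.layer p' = A.layer p + 1 →
    A.runList p (wordPrefix w n) = some (A.μ p') →
    ¬ A.SafeInf (A.layer p') p' (wordDrop w n)

/-- `w` is strongly rejected by `p` (lying in an odd layer). -/
def StronglyRej (A : Layered Q α d) (p : Q) (w : ℕ → α) : Prop :=
  Odd (A.layer p) ∧ A.SafeInf (A.layer p) p w ∧
  ∀ (n : ℕ) (p' : Q), A.layer p' = A.layer p + 1 →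
    A.runList p (wordPrefix w n) = some (A.μ p') →
    ¬ A.SafeInf (A.layer p') p' (wordDrop w n)

/-- Consistency: no two states with the same layer-1 ancestor strongly accept
resp. strongly reject a common infinite word. -/
def Consistent (A : Layered Q α d) : Prop :=
  ¬ ∃ (p p' : Q) (w : ℕ → α), A.muHat 1 p = A.muHat 1 p' ∧
      A.StronglyAcc p w ∧ A.StronglyRej p' w

/-- `w` is ultimately safe in layer `x`, for the automaton started in the
layer-1 state `q0`. -/
def UltSafeFrom (A : Layered Q α d) (q0 : Q) (x : ℕ) (w : ℕ → α) : Prop :=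
  ∃ (n : ℕ) (p : Q), A.layer p = x ∧
    A.runList q0 (wordPrefix w n) = some (A.muHat 1 p) ∧
    A.SafeInf x p (wordDrop w n)

/-- Layered acceptance from `q0`: the maximal layer in which `w` is ultimately safe is even. -/
def LayeredAcceptFrom (A : Layered Q α d) (q0 : Q) (w : ℕ → α) : Prop :=
  ∃ x : ℕ, Even x ∧ A.UltSafeFrom q0 x w ∧ ∀ y : ℕ, A.UltSafeFrom q0 y w → y ≤ x

/-- Layered rejection from `q0`: the maximal layer in which `w` is ultimately safe is odd. -/
def LayeredRejectFrom (A : Layered Q α d) (q0 : Q) (w : ℕ → α) : Prop :=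
  ∃ x : ℕ, Odd x ∧ A.UltSafeFrom q0 x w ∧ ∀ y : ℕ, A.UltSafeFrom q0 y w → y ≤ x

/-! #### The semantics automaton `⟦A⟧` (a simple-by-priorities alternating parity automaton) -/

/-- The priority of the letter `a` in the state `q` of `⟦A⟧`. -/
def semPrio (A : Layered Q α d) (q : Q) (a : α) : ℕ := A.layerOf q a

/-- The transitions of `⟦A⟧` (between leaf states): `q —a→ q'` iff, for
`x = layer(q,a)`, we have `δ_x (μ̂_x q) a = μ̂_x q'`; the transition carries priority `x`. -/
def semStep (A : Layered Q α d) (q : Q) (a : α) (q' : Q) : Prop :=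
  A.IsLeaf q' ∧ A.δ (A.muHat (A.layerOf q a) q) a = some (A.muHat (A.layerOf q a) q')

/-- Runs of `⟦A⟧` over the infinite word `w`, starting in `p`. -/
def IsSemRun (A : Layered Q α d) (w : ℕ → α) (p : Q) (ρ : ℕ → Q) : Prop :=
  ρ 0 = p ∧ ∀ i : ℕ, A.semStep (ρ i) (w i) (ρ (i + 1))

/-- The sequence of priorities produced by a run of `⟦A⟧` over `w`. -/
def runPrios (A : Layered Q α d) (w : ℕ → α) (ρ : ℕ → Q) : ℕ → ℕ :=
  fun i => A.semPrio (ρ i) (w i)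

/-- A resolver for Eve in `⟦A⟧`: given the history (the finite run so far, as a list of
(state, letter) pairs), the current state and a letter of odd priority, it picks a successor. -/
def EveResolver (A : Layered Q α d) (σ : List (Q × α) → Q → α → Q) : Prop :=
  ∀ (h : List (Q × α)) (q : Q) (a : α), Odd (A.semPrio q a) → A.semStep q a (σ h q a)

/-- A resolver for Adam in `⟦A⟧` (resolving the even-priority steps). -/
def AdamResolver (A : Layered Q α d) (τ : List (Q × α) → Q → α → Q) : Prop :=
  ∀ (h : List (Q × α)) (q : Q) (a : α), Even (A.semPrio q a) → A.semStep q a (τ h q a)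

/-- A run is consistent with the Eve-resolver `σ`: every odd-priority step follows `σ`. -/
def ConsEve (A : Layered Q α d) (σ : List (Q × α) → Q → α → Q) (w : ℕ → α) (ρ : ℕ → Q) : Prop :=
  ∀ i : ℕ, Odd (A.semPrio (ρ i) (w i)) →
    ρ (i + 1) = σ (List.ofFn fun j : Fin i => (ρ (j : ℕ), w (j : ℕ))) (ρ i) (w i)

/-- A run is consistent with the Adam-resolver `τ`: every even-priority step follows `τ`. -/
def ConsAdam (A : Layered Q α d) (τ : List (Q × α) → Q → α → Q) (w : ℕ → α) (ρ : ℕ → Q) : Prop :=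
  ∀ i : ℕ, Even (A.semPrio (ρ i) (w i)) →
    ρ (i + 1) = τ (List.ofFn fun j : Fin i => (ρ (j : ℕ), w (j : ℕ))) (ρ i) (w i)

/-- Acceptance of `w` by `⟦A⟧` from the (leaf) state `p`: Eve has a winning strategy
in the game `G(⟦A⟧,w)`, i.e. a resolver all of whose consistent runs satisfy parity. -/
def SemAccept (A : Layered Q α d) (p : Q) (w : ℕ → α) : Prop :=
  ∃ σ : List (Q × α) → Q → α → Q, A.EveResolver σ ∧
    ∀ ρ : ℕ → Q, A.IsSemRun w p ρ → A.ConsEve σ w ρ → ParityAccept (A.runPrios w ρ)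

/-- Uniform semantic determinism: leaf states with the same layer-1 ancestor
recognise the same language in `⟦A⟧`. -/
def UnifSD (A : Layered Q α d) : Prop :=
  ∀ p q : Q, A.IsLeaf p → A.IsLeaf q → A.muHat 1 p = A.muHat 1 q →
    ∀ w : ℕ → α, (A.SemAccept p w ↔ A.SemAccept q w)

/-! #### Longest suffix resolvers -/

/-- `v` is a suffix-witness to `r`: the layer of `r` has a run labelled `v` ending in `r`. -/
def suffixReaches (A : Layered Q α d) (r : Q) (v : List α) : Prop :=
  ∃ p : Q, A.layer p = A.layer r ∧ A.runList p v = some r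

/-- The length of the longest suffix `v` of `u` such that the layer of `r` has a
run labelled `v` ending in `r`. -/
def longestSuffixLen (A : Layered Q α d) (u : List α) (r : Q) : ℕ :=
  Nat.findGreatest (fun k => k ≤ u.length ∧ A.suffixReaches r (u.drop (u.length - k))) u.length

/-- A longest suffix resolver for Eve, initialised to `u0`: a valid Eve-resolver that,
at a step of odd priority `x` after having read `v`, moves to an `a`-successor `q'`
maximising the length of the longest `(x+1)`-suffix of `u0·v·a` to `μ̂_{x+1} q'`. -/
def IsLongestSuffixResolverE (A : Layered Q α d) (u0 : List α)
    (σ : List (Q × α) → Q → α → Q) : Prop :=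
  A.EveResolver σ ∧
  ∀ (h : List (Q × α)) (q : Q) (a : α), Odd (A.semPrio q a) →
    ∀ q' : Q, A.semStep q a q' →
      A.longestSuffixLen (u0 ++ h.map Prod.snd ++ [a]) (A.muHat (A.semPrio q a + 1) q') ≤
      A.longestSuffixLen (u0 ++ h.map Prod.snd ++ [a]) (A.muHat (A.semPrio q a + 1) (σ h q a))

/-- A longest suffix resolver for Adam, initialised to `u0` (symmetric, for even priorities). -/
def IsLongestSuffixResolverA (A : Layered Q α d) (u0 : List α)
    (τ : List (Q × α) → Q → α → Q) : Prop :=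
  A.AdamResolver τ ∧
  ∀ (h : List (Q × α)) (q : Q) (a : α), Even (A.semPrio q a) →
    ∀ q' : Q, A.semStep q a q' →
      A.longestSuffixLen (u0 ++ h.map Prod.snd ++ [a]) (A.muHat (A.semPrio q a + 1) q') ≤
      A.longestSuffixLen (u0 ++ h.map Prod.snd ++ [a]) (A.muHat (A.semPrio q a + 1) (τ h q a))

/-! #### The random walk on `⟦A⟧` -/

/-- The uniform step probability of the random walk of `⟦A⟧`. -/
def stepProb (A : Layered Q α d) (q : Q) (a : α) (q' : Q) : ENNReal :=
  if A.semStep q a q' then ((Nat.card {p : Q // A.semStep q a p} : ENNReal))⁻¹ else 0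

/-- `m` is the Markov measure of the random walk of `⟦A⟧` over the word `w` started at `p`:
a probability measure on `ℕ → Q` whose cylinder probabilities are the products of the
uniform step probabilities. -/
def IsWalkMeasure [MeasurableSpace Q] (A : Layered Q α d) (w : ℕ → α) (p : Q)
    (m : MeasureTheory.Measure (ℕ → Q)) : Prop :=
  MeasureTheory.IsProbabilityMeasure m ∧
  ∀ (n : ℕ) (s : Fin (n + 1) → Q),
    m {ρ : ℕ → Q | ∀ i : Fin (n + 1), ρ (i : ℕ) = s i} =
      (if s 0 = p then 1 else 0) *
        ∏ i : Fin n, A.stepProb (s i.castSucc) (w (i : ℕ)) (s i.succ)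

/-! #### Normal form, centrality, safe minimality, central sequences -/

/-- Normal form: (N1) every layer `x ≥ 2` is a union of non-trivial SCCs, and
(N2) the safe language of every child is strictly smaller than that of its parent. -/
def NormalForm (A : Layered Q α d) : Prop :=
  ∀ q : Q, 2 ≤ A.layer q →
    (∀ (u : List α) (q' : Q), A.runList q u = some q' →
      ∃ v : List α, v ≠ [] ∧ A.runList q' v = some q) ∧
    (∀ p : Q, 1 < A.layer p → A.μ p = q →
      ∃ u : List α, (A.runList q u).isSome = true ∧ A.runList p u = none)

/-- Inclusion of `x`-safe languages. -/
def SafeLE (A : Layered Q α d) (x : ℕ) (p q : Q) : Prop :=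
  (∀ u : List α, A.SafeFin x p u → A.SafeFin x q u) ∧
  (∀ w : ℕ → α, A.SafeInf x p w → A.SafeInf x q w)

/-- Centralised: siblings (same parent) whose safe languages are included,
lie in the same SCC of their layer. -/
def Centralised (A : Layered Q α d) : Prop :=
  ∀ p q : Q, 2 ≤ A.layer p → A.layer q = A.layer p →
    A.muHat (A.layer p - 1) p = A.muHat (A.layer p - 1) q →
    A.SafeLE (A.layer p) p q →
    (∃ u : List α, A.runList p u = some q) ∧ (∃ v : List α, A.runList q v = some p)

/-- `L(p) = L(q)`: all leaves above (the layer-1 ancestor of) `p` and all leaves above `q`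
recognise the same language in `⟦A⟧`. -/
def LangEq1 (A : Layered Q α d) (p q : Q) : Prop :=
  ∀ l l' : Q, A.IsLeaf l → A.IsLeaf l' → A.muHat 1 l = A.muHat 1 p →
    A.muHat 1 l' = A.muHat 1 q → ∀ w : ℕ → α, (A.SemAccept l w ↔ A.SemAccept l' w)

/-- The equivalence `p ≈_x q`: language equivalence together with equality of all
`y`-safe languages for `2 ≤ y ≤ x`. -/
def ApproxEq (A : Layered Q α d) (x : ℕ) (p q : Q) : Prop :=
  A.LangEq1 p q ∧ ∀ y : ℕ, 2 ≤ y → y ≤ x →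
    ((∀ u : List α, A.SafeFin y p u ↔ A.SafeFin y q u) ∧
     (∀ w : ℕ → α, A.SafeInf y p w ↔ A.SafeInf y q w))

/-- Safe minimality: `≈_x`-equivalent states of the same layer are equal. -/
def SafeMinimal (A : Layered Q α d) : Prop :=
  ∀ p q : Q, A.layer p = A.layer q → A.ApproxEq (A.layer p) p q → p = q

/-- `z` is a central sequence for the state `p` (of layer `x = layer p`). -/
def IsCentralSeq (A : Layered Q α d) (p : Q) (z : List α) : Prop :=
  z ≠ [] ∧ A.runList p z = some p ∧
  (∀ q : Q, A.layer q = A.layer p →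
    A.muHat (A.layer p - 1) q = A.muHat (A.layer p - 1) p →
    (A.runList q z = some p ∨ A.runList q z = none)) ∧
  (∀ q' : Q, A.layer q' = A.layer p + 1 →
    A.muHat (A.layer p - 1) q' = A.muHat (A.layer p - 1) p →
    A.runList q' z = none)

end Layered

/-! ### Morphisms of layered automata -/

/-- A morphism of layered automata. -/
structure IsLayMorphism {Q R α : Type} {d d' : ℕ} (A : Layered Q α d) (B : Layered R α d')
    (φ : Q → R) : Prop where
  map_init : φ A.init = B.init
  map_step : ∀ q a q', A.δ q a = some q' → B.δ (φ q) a = some (φ q')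
  map_anc : ∀ p q, A.IsAncestor p q → B.IsAncestor (φ p) (φ q)

/-- A strong morphism of layered automata additionally preserves non-transitions. -/
def IsStrongLayMorphism {Q R α : Type} {d d' : ℕ} (A : Layered Q α d) (B : Layered R α d')
    (φ : Q → R) : Prop :=
  IsLayMorphism A B φ ∧ ∀ q a, A.δ q a = none → B.δ (φ q) a = none

/-- An isomorphism of layered automata: a bijection on states that restricts to
isomorphisms of the layer transition systems, preserves the initial state, and
commutes with the morphisms `μ`. -/
structure IsLayIso {Q R α : Type} {d d' : ℕ} (A : Layered Q α d) (B : Layered R α d')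
    (φ : Q ≃ R) : Prop where
  map_layer : ∀ q, B.layer (φ q) = A.layer q
  map_init : φ A.init = B.init
  map_mu : ∀ q, φ (A.μ q) = B.μ (φ q)
  map_step : ∀ q a, (A.δ q a).map φ = B.δ (φ q) a

/-- `L(⟦A⟧) = L(⟦B⟧)`: the semantics automata (with any choice of initial leaf states
above the respective initial states) accept the same infinite words. -/
def SemLangEq {Q R α : Type} {d d' : ℕ} (A : Layered Q α d) (B : Layered R α d') : Prop :=
  ∀ (p : Q) (q : R), A.IsLeaf p → A.muHat 1 p = A.init → B.IsLeaf q → B.muHat 1 q = B.init →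
    ∀ w : ℕ → α, (A.SemAccept p w ↔ B.SemAccept q w)

/-! ### Deterministic parity automata -/

/-- A deterministic parity automaton over `α` with priorities in `[1,d]`. -/
structure DPA (Q α : Type) (d : ℕ) where
  init : Q
  next : Q → α → Q
  prio : Q → α → ℕ
  prio_pos : ∀ q a, 1 ≤ prio q a
  prio_le : ∀ q a, prio q a ≤ d

namespace DPA

variable {Q α : Type} {d : ℕ}

/-- The unique run of a DPA on an infinite word. -/
def run (B : DPA Q α d) (w : ℕ → α) : ℕ → Q
  | 0 => B.init
  | n + 1 => B.next (run B w n) (w n)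

/-- Acceptance by a DPA: the priorities along the unique run satisfy parity. -/
def Accepts (B : DPA Q α d) (w : ℕ → α) : Prop :=
  ParityAccept (fun i => B.prio (B.run w i) (w i))

end DPA

/-- `L` is ω-regular: recognised by some deterministic parity automaton. -/
def IsOmegaRegular {α : Type} (L : Set (ℕ → α)) : Prop :=
  ∃ (n d : ℕ) (B : DPA (Fin n) α d), ∀ w : ℕ → α, w ∈ L ↔ B.Accepts w

/-! ### Nondeterministic coBüchi automata -/

/-- A (complete) nondeterministic coBüchi automaton: transitions carry priorities in `{1,2}`. -/
structure NCA (Q α : Type) where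
  init : Q
  trans : Q → α → ℕ → Q → Prop
  prio_mem : ∀ q a x q', trans q a x q' → x = 1 ∨ x = 2
  complete : ∀ q a, ∃ x q', trans q a x q'

namespace NCA

variable {Q α : Type}

/-- Nondeterministic acceptance from the state `q`. -/
def AcceptFrom (B : NCA Q α) (q : Q) (w : ℕ → α) : Prop :=
  ∃ (ρ : ℕ → Q) (pri : ℕ → ℕ), ρ 0 = q ∧
    (∀ i : ℕ, B.trans (ρ i) (w i) (pri i) (ρ (i + 1))) ∧ ParityAccept pri

/-- Semantic determinism: every `a`-successor of `p` recognises `a⁻¹ L(p)`. -/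
def SemDet (B : NCA Q α) : Prop :=
  ∀ p a x q, B.trans p a x q →
    ∀ w : ℕ → α, (B.AcceptFrom q w ↔ B.AcceptFrom p (prependW [a] w))

/-- Safe determinism: all `a`-transitions from a state carry the same priority, and
there is at most one `a`-transition of priority `2` from each state. -/
def SafeDet (B : NCA Q α) : Prop :=
  (∀ q a x q' x' q'', B.trans q a x q' → B.trans q a x' q'' → x = x') ∧
  (∀ q a q' q'', B.trans q a 2 q' → B.trans q a 2 q'' → q' = q'')

/-- 1-saturation: priority-1 transitions go to all language-equivalent states. -/
def OneSaturated (B : NCA Q α) : Prop :=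
  ∀ q a p p', B.trans q a 1 p →
    (∀ w : ℕ → α, (B.AcceptFrom p' w ↔ B.AcceptFrom p w)) → B.trans q a 1 p'

end NCA

/-! ### Simple-by-priorities alternating parity automata (abstract) -/

/-- A simple-by-priorities alternating parity automaton: a complete transition system
over `α × [1,d]` in which all `a`-transitions from a state carry the same priority. -/
structure SPA (Q α : Type) (d : ℕ) where
  init : Q
  step : Q → α → Q → Prop
  prio : Q → α → ℕ
  prio_pos : ∀ q a, 1 ≤ prio q a
  prio_le : ∀ q a, prio q a ≤ d
  complete : ∀ q a, ∃ q', step q a q'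

/-! ### The congruence on tuples of finite words -/

/-- The data of the congruence at one level (tuples of a fixed length,
represented as reversed lists of components: the head is the last component). -/
structure CongrLevel (α : Type) where
  bot : List (List α) → Prop
  eq : List (List α) → List (List α) → Prop
  ptd : List (List α) → Prop

/-- Concatenate a finite word to the last component of a tuple
(tuples are represented as reversed lists: the head is the last component). -/
def tcat {α : Type} (t : List (List α)) (v : List α) : List (List α) :=
  match t with
  | h :: rest => (h ++ v) :: rest
  | [] => []

/-- Merge the last two components of a tuple. -/
def tmerge {α : Type} (t : List (List α)) : List (List α) :=
  match t with
  | u' :: h :: rest => (h ++ u') :: rest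
  | t' => t'

/-- The congruence data at level `n` (handling tuples of length `n+1`), defined by
recursion on the level, following the inductive definition of `≈ ⊥`, `≈` and `pointed`. -/
def congrData {α : Type} [Inhabited α] (L : Set (ℕ → α)) : ℕ → CongrLevel α
  | 0 =>
    { bot := fun _ => False
      eq := fun t s =>
        match t, s with
        | [u], [v] => ∀ w : ℕ → α, (prependW u w ∈ L ↔ prependW v w ∈ L)
        | _, _ => False
      ptd := fun _ => True }
  | n + 1 =>
    let C := congrData L n
    let bot : List (List α) → Prop := fun t =>
      match t with
      | u' :: ubar =>
        C.bot (tmerge (u' :: ubar)) ∨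
        ∀ w : List α, w ≠ [] → C.eq (tcat (tmerge (u' :: ubar)) w) ubar →
          ((prependW ubar.reverse.flatten (perWord (u' ++ w)) ∈ L) ↔ Even (n + 1))
      | [] => True
    let eq : List (List α) → List (List α) → Prop := fun t s =>
      C.eq (tmerge t) (tmerge s) ∧ ∀ v : List α, (bot (tcat t v) ↔ bot (tcat s v))
    let ptd : List (List α) → Prop := fun t =>
      match t with
      | u' :: ubar =>
        ¬ bot (u' :: ubar) ∧ C.ptd ubar ∧
        ∀ (vbar : List (List α)) (v' : List α), vbar.length = n + 1 → C.ptd vbar →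
          C.eq (tcat vbar v') ubar → ¬ bot ((v' ++ u') :: vbar) →
          eq ((v' ++ u') :: vbar) (u' :: ubar)
      | [] => False
    { bot := bot, eq := eq, ptd := ptd }

/-- `t ≈ ⊥` (for a nonempty tuple `t`, in reversed representation). -/
def TupBot {α : Type} [Inhabited α] (L : Set (ℕ → α)) (t : List (List α)) : Prop :=
  (congrData L (t.length - 1)).bot t

/-- `t ≈ s` (for nonempty tuples of the same length, in reversed representation). -/
def TupEq {α : Type} [Inhabited α] (L : Set (ℕ → α)) (t s : List (List α)) : Prop :=
  t.length = s.length ∧ (congrData L (t.length - 1)).eq t s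

/-- `t` is pointed. -/
def TupPointed {α : Type} [Inhabited α] (L : Set (ℕ → α)) (t : List (List α)) : Prop :=
  (congrData L (t.length - 1)).ptd t

/-- `cls` exhibits `A` as (a copy of) the congruence automaton `A_≈` of `L`: its states
are the `≈`-classes of pointed tuples (the layer being the tuple length), transitions
are given by concatenation in the last component, the initial state is the class of
`(ε)`, and the morphisms are given by merging the last two components. -/
structure IsCongrAut {α : Type} [Inhabited α] (L : Set (ℕ → α)) {Q : Type} {d : ℕ}
    (A : Layered Q α d) (cls : (t : List (List α)) → TupPointed L t → Q) : Prop where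
  surj : ∀ q : Q, ∃ (t : List (List α)) (ht : TupPointed L t), cls t ht = q
  cls_eq : ∀ t ht s hs, cls t ht = cls s hs ↔ TupEq L t s
  layer_eq : ∀ t ht, A.layer (cls t ht) = t.length
  init_eq : ∀ h : TupPointed L [([] : List α)], cls [([] : List α)] h = A.init
  step_some : ∀ t ht (a : α) (h' : TupPointed L (tcat t [a])),
    A.δ (cls t ht) a = some (cls (tcat t [a]) h')
  step_none : ∀ t ht (a : α), TupBot L (tcat t [a]) → A.δ (cls t ht) a = none
  mu_eq : ∀ (u' : List α) (ubar : List (List α)) (h : TupPointed L (u' :: ubar))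
    (h' : TupPointed L (tmerge (u' :: ubar))), ubar ≠ [] →
    A.μ (cls (u' :: ubar) h) = cls (tmerge (u' :: ubar)) h'

end

open scoped Classical

section Aux

namespace Layered

variable {Q α : Type} {d : ℕ}

/-- The segment `w[s..n)` of an infinite word. -/
def seg (w : ℕ → α) (s n : ℕ) : List α := List.ofFn (fun i : Fin (n - s) => w (s + i))

@[simp] lemma seg_length (w : ℕ → α) (s n : ℕ) : (seg w s n).length = n - s := by
  simp [seg]

@[simp] lemma seg_self (w : ℕ → α) (s : ℕ) : seg w s s = [] := by
  simp [seg]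

@[simp] lemma seg_getElem (w : ℕ → α) (s n i : ℕ) (h : i < (seg w s n).length) :
    (seg w s n)[i] = w (s + i) := by
  simp [seg]

lemma wordPrefix_eq_seg (w : ℕ → α) (n : ℕ) : wordPrefix w n = seg w 0 n := by
  apply List.ext_getElem <;> simp [wordPrefix, seg]

lemma wordPrefix_wordDrop (w : ℕ → α) (s n : ℕ) :
    wordPrefix (wordDrop w s) n = seg w s (s + n) := by
  apply List.ext_getElem <;> simp [wordPrefix, seg, wordDrop]

lemma drop_seg (w : ℕ → α) (k n : ℕ) (h : k ≤ n) :
    (seg w 0 n).drop k = seg w k n := by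
  apply List.ext_getElem
  · simp only [List.length_drop, seg_length]; omega
  · intro i h1 h2
    rw [List.getElem_drop]
    simp only [seg_getElem, seg_length]
    congr 1; omega

lemma seg_succ (w : ℕ → α) (s n : ℕ) (h : s ≤ n) :
    seg w s (n + 1) = seg w s n ++ [w n] := by
  apply List.ext_getElem
  · simp only [seg_length, List.length_append, List.length_singleton]; omega
  · intro i h1 h2
    rcases Nat.lt_or_ge i ((seg w s n).length) with hi | hi
    · rw [List.getElem_append_left hi]; simp
    · rw [List.getElem_append_right hi]
      simp only [seg_length] at hi h1
      simp only [seg_getElem, seg_length, List.getElem_singleton]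
      congr 1; omega

lemma seg_append (w : ℕ → α) (s m n : ℕ) (h1 : s ≤ m) (h2 : m ≤ n) :
    seg w s m ++ seg w m n = seg w s n := by
  apply List.ext_getElem
  · simp only [seg_length, List.length_append]; omega
  · intro i ha hb
    rcases Nat.lt_or_ge i ((seg w s m).length) with hi | hi
    · rw [List.getElem_append_left hi]; simp
    · rw [List.getElem_append_right hi]
      simp only [seg_length] at hi
      simp only [seg_getElem, seg_length]
      congr 1; omega

@[simp] lemma wordDrop_wordDrop (w : ℕ → α) (s n : ℕ) :
    wordDrop (wordDrop w s) n = wordDrop w (s + n) := by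
  funext i; simp [wordDrop]; ring_nf

@[simp] lemma runList_nil (A : Layered Q α d) (q : Q) : A.runList q [] = some q := rfl

lemma runList_cons (A : Layered Q α d) (q : Q) (a : α) (u : List α) :
    A.runList q (a :: u) = (A.δ q a).bind (fun r => A.runList r u) := by
  cases h : A.δ q a <;> simp [runList, h]

lemma runList_append (A : Layered Q α d) (q : Q) (u v : List α) :
    A.runList q (u ++ v) = (A.runList q u).bind (fun r => A.runList r v) := by
  induction u generalizing q with
  | nil => simp
  | cons a u ih =>
    rw [List.cons_append, runList_cons, runList_cons]
    cases h : A.δ q a <;> simp [ih]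

lemma runList_layer (A : Layered Q α d) {q q' : Q} {u : List α}
    (h : A.runList q u = some q') : A.layer q' = A.layer q := by
  induction u generalizing q with
  | nil => simp at h; subst h; rfl
  | cons a u ih =>
    rw [runList_cons] at h
    cases hd : A.δ q a with
    | none => simp [hd] at h
    | some r =>
      rw [hd] at h; simp at h
      rw [ih h, A.δ_layer q a r hd]

lemma runList_isSome_prefix (A : Layered Q α d) {q : Q} {u v : List α}
    (h : (A.runList q (u ++ v)).isSome) : (A.runList q u).isSome := by
  rw [runList_append] at h
  cases hu : A.runList q u <;> simp [hu] at h ⊢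

end Layered

end Aux

section Aux2

namespace Layered

variable {Q α : Type} {d : ℕ}

lemma muHat_of_le (A : Layered Q α d) {x : ℕ} {q : Q} (h : A.layer q ≤ x) :
    A.muHat x q = q := by
  unfold muHat
  rw [Nat.sub_eq_zero_of_le h]
  rfl

lemma muHat_self (A : Layered Q α d) (q : Q) : A.muHat (A.layer q) q = q :=
  A.muHat_of_le le_rfl

lemma muHat_step (A : Layered Q α d) {x : ℕ} {q : Q} (h : x < A.layer q) :
    A.muHat x q = A.μ (A.muHat (x + 1) q) := by
  unfold muHat
  have h1 : A.layer q - x = (A.layer q - (x + 1)) + 1 := by omega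
  rw [h1, Function.iterate_succ_apply']

lemma layer_mu (A : Layered Q α d) {q : Q} (h : 1 < A.layer q) :
    A.layer (A.μ q) = A.layer q - 1 := by
  have := A.μ_layer q h; omega

lemma layer_muHat (A : Layered Q α d) {x : ℕ} {q : Q} (h1 : 1 ≤ x) (h2 : x ≤ A.layer q) :
    A.layer (A.muHat x q) = x := by
  have H : ∀ n x (q : Q), 1 ≤ x → x ≤ A.layer q → A.layer q - x = n →
      A.layer (A.muHat x q) = x := by
    intro n
    induction n with
    | zero =>
      intro x q _ h2 h3
      have : x = A.layer q := by omega
      subst this; rw [A.muHat_self]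
    | succ n ih =>
      intro x q h1 h2 h3
      have hx : x < A.layer q := by omega
      rw [A.muHat_step hx]
      have hl : A.layer (A.muHat (x + 1) q) = x + 1 := ih (x + 1) q (by omega) (by omega) (by omega)
      have := A.μ_layer (A.muHat (x + 1) q) (by omega)
      omega
  exact H (A.layer q - x) x q h1 h2 rfl

lemma muHat_muHat (A : Layered Q α d) {x y : ℕ} {q : Q}
    (h1 : 1 ≤ y) (h2 : y ≤ x) (h3 : x ≤ A.layer q) :
    A.muHat y (A.muHat x q) = A.muHat y q := by
  have hl : A.layer (A.muHat x q) = x := A.layer_muHat (le_trans h1 h2) h3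
  unfold muHat at hl ⊢
  rw [hl]
  show (A.μ)^[x - y] ((A.μ)^[A.layer q - x] q) = _
  rw [← Function.iterate_add_apply]
  congr 1
  omega

lemma muHat_one_mu (A : Layered Q α d) {p : Q} (h : 1 < A.layer p) :
    A.muHat 1 (A.μ p) = A.muHat 1 p := by
  unfold muHat
  rw [A.layer_mu h]
  have h1 : A.layer p - 1 = (A.layer p - 1 - 1) + 1 := by omega
  conv_rhs => rw [h1]
  rw [Function.iterate_succ_apply]

lemma runList_mu (A : Layered Q α d) {p p' : Q} {u : List α}
    (h : A.runList p u = some p') (hl : 1 < A.layer p) :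
    A.runList (A.μ p) u = some (A.μ p') := by
  induction u generalizing p with
  | nil => simp_all
  | cons a u ih =>
    rw [runList_cons] at h ⊢
    cases hd : A.δ p a with
    | none => simp [hd] at h
    | some r =>
      rw [hd] at h; simp at h
      rw [A.μ_morph p a r hl hd]
      simp
      exact ih h (by rw [A.δ_layer p a r hd]; exact hl)

lemma runList_muHat (A : Layered Q α d) {p p' : Q} {u : List α} {y : ℕ}
    (h : A.runList p u = some p') (h1 : 1 ≤ y) (h2 : y ≤ A.layer p) :
    A.runList (A.muHat y p) u = some (A.muHat y p') := by
  have hpl : A.layer p' = A.layer p := A.runList_layer h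
  have H : ∀ n y, 1 ≤ y → y ≤ A.layer p → A.layer p - y = n →
      A.runList (A.muHat y p) u = some (A.muHat y p') := by
    intro n
    induction n with
    | zero =>
      intro y hy1 hy2 hy3
      have hy : y = A.layer p := by omega
      subst hy
      rw [A.muHat_self, ← hpl, A.muHat_self]
      exact h
    | succ n ih =>
      intro y hy1 hy2 hy3
      have hx : y < A.layer p := by omega
      have prev := ih (y + 1) (by omega) (by omega) (by omega)
      have hlev : A.layer (A.muHat (y + 1) p) = y + 1 := A.layer_muHat (by omega) (by omega)
      have := A.runList_mu prev (by omega)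
      rw [A.muHat_step hx, A.muHat_step (by omega : y < A.layer p')]
      exact this
  exact H (A.layer p - y) y h1 h2 rfl

lemma leaf_above (A : Layered Q α d) (t : Q) :
    ∃ l, A.IsLeaf l ∧ A.layer t ≤ A.layer l ∧ A.muHat (A.layer t) l = t := by
  have H : ∀ n (t : Q), d - A.layer t ≤ n →
      ∃ l, A.IsLeaf l ∧ A.layer t ≤ A.layer l ∧ A.muHat (A.layer t) l = t := by
    intro n
    induction n with
    | zero =>
      intro t ht
      refine ⟨t, ?_, le_rfl, A.muHat_self t⟩
      intro p hp hmu
      have h1 := A.μ_layer p hp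
      have h2 := A.layer_le p
      have h3 := A.layer_le t
      rw [hmu] at h1
      omega
    | succ n ih =>
      intro t ht
      by_cases hleaf : A.IsLeaf t
      · exact ⟨t, hleaf, le_rfl, A.muHat_self t⟩
      · simp only [IsLeaf, not_forall] at hleaf
        obtain ⟨p, hp, hmu⟩ := hleaf
        rw [not_ne_iff] at hmu
        have hpl : A.layer p = A.layer t + 1 := by
          have := A.μ_layer p hp; rw [hmu] at this; omega
        have hple := A.layer_le p
        obtain ⟨l, hl, hle, hmuh⟩ := ih p (by omega)
        refine ⟨l, hl, by omega, ?_⟩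
        have hlt : A.layer t < A.layer l := by omega
        rw [A.muHat_step hlt, ← hpl, hmuh, hmu]
  exact H (d - A.layer t) t le_rfl

end Layered

end Aux2

section Aux3

namespace Layered

variable {Q α : Type} {d : ℕ}

lemma layerOf_le_layer (A : Layered Q α d) (q : Q) (a : α) : A.layerOf q a ≤ A.layer q :=
  Nat.findGreatest_le _

lemma one_le_layerOf (A : Layered Q α d) (q : Q) (a : α) : 1 ≤ A.layerOf q a := by
  apply Nat.le_findGreatest (A.layer_pos q)
  exact A.complete1 (A.muHat 1 q) a (A.layer_muHat le_rfl (A.layer_pos q))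

lemma semPrio_eq (A : Layered Q α d) (q : Q) (a : α) : A.semPrio q a = A.layerOf q a := rfl

/-- If `δ` is defined at layer `y ≤ layer q`, then `layerOf q a ≥ y`. -/
lemma le_layerOf (A : Layered Q α d) {q : Q} {a : α} {y : ℕ} (h1 : y ≤ A.layer q)
    (h2 : (A.δ (A.muHat y q) a).isSome) : y ≤ A.layerOf q a :=
  Nat.le_findGreatest h1 h2

lemma layer_le_of_semStep (A : Layered Q α d) {q q' : Q} {a : α} (h : A.semStep q a q') :
    A.layerOf q a ≤ A.layer q' := by
  set x := A.layerOf q a with hx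
  have hxq : x ≤ A.layer q := A.layerOf_le_layer q a
  have hx1 : 1 ≤ x := A.one_le_layerOf q a
  have hlx : A.layer (A.muHat x q) = x := A.layer_muHat hx1 hxq
  have h2 := A.δ_layer _ a _ h.2
  rw [hlx] at h2
  by_contra hc
  push_neg at hc
  rw [A.muHat_of_le (by omega)] at h2
  omega

lemma semStep_proj (A : Layered Q α d) {q q' : Q} {a : α} (h : A.semStep q a q')
    {y : ℕ} (h1 : 1 ≤ y) (h2 : y ≤ A.layerOf q a) :
    A.δ (A.muHat y q) a = some (A.muHat y q') := by
  set x := A.layerOf q a with hx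
  have hxq : x ≤ A.layer q := A.layerOf_le_layer q a
  have hxq' : x ≤ A.layer q' := A.layer_le_of_semStep h
  have H : ∀ n y, 1 ≤ y → y ≤ x → x - y = n →
      A.δ (A.muHat y q) a = some (A.muHat y q') := by
    intro n
    induction n with
    | zero =>
      intro y hy1 hy2 hy3
      have : y = x := by omega
      subst this
      exact h.2
    | succ n ih =>
      intro y hy1 hy2 hy3
      have prev := ih (y + 1) (by omega) (by omega) (by omega)
      have hlev : A.layer (A.muHat (y + 1) q) = y + 1 := A.layer_muHat (by omega) (by omega)
      have := A.μ_morph _ a _ (by omega) prev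
      rw [A.muHat_step (by omega : y < A.layer q), A.muHat_step (by omega : y < A.layer q')]
      exact this
  exact H (x - y) y h1 h2 rfl

variable {A : Layered Q α d} {w : ℕ → α} {q : Q} {ρ : ℕ → Q}

lemma run_leaf (hq : A.IsLeaf q) (hρ : A.IsSemRun w q ρ) (i : ℕ) : A.IsLeaf (ρ i) := by
  cases i with
  | zero => rw [hρ.1]; exact hq
  | succ i => exact (hρ.2 i).1

/-- The projected run at level `y` follows the layer transition systems, as long as
all priorities seen are `≥ y`. -/
lemma run_seg (hρ : A.IsSemRun w q ρ) {y : ℕ} (h1 : 1 ≤ y) {N : ℕ}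
    (hy : ∀ i, N ≤ i → y ≤ A.layerOf (ρ i) (w i)) :
    ∀ m, N ≤ m → A.runList (A.muHat y (ρ N)) (seg w N m) = some (A.muHat y (ρ m)) := by
  intro m hm
  induction m, hm using Nat.le_induction with
  | base => rw [seg_self]; rfl
  | succ m hm ih =>
    rw [seg_succ w N m hm, runList_append, ih]
    simp only [Option.bind_some]
    rw [runList_cons, A.semStep_proj (hρ.2 m) h1 (hy m hm)]
    rfl

/-- Priorities along the run are bounded below by the minimal layer where `δ`
remains defined. -/
lemma layer_ge_of_muHat_eq {x : ℕ} {p r : Q} (h : A.muHat x p = r) (hr : x ≤ A.layer r) :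
    x ≤ A.layer p := by
  by_contra hc
  push_neg at hc
  rw [A.muHat_of_le (by omega)] at h
  subst h
  omega

end Layered

end Aux3

section Aux4

/-- The set of values occurring infinitely often. -/
def infOftenSet (pi : ℕ → ℕ) : Set ℕ := {x : ℕ | ∀ N : ℕ, ∃ n : ℕ, N ≤ n ∧ pi n = x}

lemma minInfOften_def (pi : ℕ → ℕ) : minInfOften pi = sInf (infOftenSet pi) := rfl

lemma infOftenSet_nonempty {pi : ℕ → ℕ} {d : ℕ} (hbd : ∀ n, pi n ≤ d) :
    (infOftenSet pi).Nonempty := by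
  classical
  let f : ℕ → Fin (d + 1) := fun n => ⟨pi n, Nat.lt_succ_of_le (hbd n)⟩
  obtain ⟨y, hy⟩ := Finite.exists_infinite_fiber f
  refine ⟨(y : ℕ), ?_⟩
  intro N
  by_contra hc
  push_neg at hc
  have hfin : (f ⁻¹' {y}).Finite := by
    apply Set.Finite.subset (Set.finite_Iio N)
    intro n hn
    simp only [Set.mem_preimage, Set.mem_singleton_iff] at hn
    by_contra hge
    simp only [Set.mem_Iio, not_lt] at hge
    exact hc n hge (by rw [← hn])
  exact Set.not_infinite.mpr hfin (Set.infinite_coe_iff.mp hy)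
  
lemma minInfOften_mem {pi : ℕ → ℕ} {d : ℕ} (hbd : ∀ n, pi n ≤ d) :
    minInfOften pi ∈ infOftenSet pi :=
  Nat.sInf_mem (infOftenSet_nonempty hbd)

lemma minInfOften_eventually_ge {pi : ℕ → ℕ} {d : ℕ} (hbd : ∀ n, pi n ≤ d) :
    ∃ N : ℕ, ∀ n, N ≤ n → minInfOften pi ≤ pi n := by
  classical
  set l := minInfOften pi with hl
  have hnot : ∀ v, ∃ N, v < l → ∀ n, N ≤ n → pi n ≠ v := by
    intro v
    by_cases hv : v < l
    · have hvnot : v ∉ infOftenSet pi := by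
        intro hmem
        have := Nat.sInf_le hmem
        rw [← minInfOften_def] at this
        omega
      simp only [infOftenSet, Set.mem_setOf_eq, not_forall] at hvnot
      obtain ⟨N, hN⟩ := hvnot
      push_neg at hN
      exact ⟨N, fun _ n hn => hN n hn⟩
    · exact ⟨0, fun h => absurd h hv⟩
  choose g hg using hnot
  refine ⟨(Finset.range l).sup g, ?_⟩
  intro n hn
  by_contra hc
  push_neg at hc
  have h1 : g (pi n) ≤ (Finset.range l).sup g :=
    Finset.le_sup (Finset.mem_range.mpr hc)
  exact hg (pi n) hc n (le_trans h1 hn) rfl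

end Aux4

section Core

namespace Layered

variable {Q α : Type} {d : ℕ}

/-- **Core lemma.** If a run consistent with a longest-suffix choice rule has all
priorities eventually `≥ l`, and priority `l` occurs infinitely often, then there is
no state `t` of layer `l+1` sitting above the projected layer-`l` run from which the
remaining word is `(l+1)`-safe. -/
lemma core [Fintype Q] {A : Layered Q α d} {w : ℕ → α} {q : Q} {ρ : ℕ → Q}
    (hq : A.IsLeaf q) (hρ : A.IsSemRun w q ρ) {l n₀ : ℕ} (hl1 : 1 ≤ l)
    (hge : ∀ i, n₀ ≤ i → l ≤ A.layerOf (ρ i) (w i))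
    (hio : ∀ N, ∃ j, N ≤ j ∧ A.layerOf (ρ j) (w j) = l)
    (hres : ∀ j, n₀ ≤ j → A.layerOf (ρ j) (w j) = l → ∀ q', A.semStep (ρ j) (w j) q' →
      A.longestSuffixLen (wordPrefix w (j+1)) (A.muHat (l+1) q') ≤
      A.longestSuffixLen (wordPrefix w (j+1)) (A.muHat (l+1) (ρ (j+1))))
    {k : ℕ} {t : Q} (hk : n₀ ≤ k) (htl : A.layer t = l + 1)
    (hμt : A.μ t = A.muHat l (ρ k))
    (hsafe : A.SafeInf (l+1) t (wordDrop w k)) : False := by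
  classical
  -- the safe run from `t` is total
  have hsafe' : ∀ m, k ≤ m → (A.runList t (seg w k m)).isSome = true := by
    intro m hm
    have h0 := hsafe (m - k)
    unfold SafeFin at h0
    rw [wordPrefix_wordDrop, A.muHat_of_le (le_of_eq htl)] at h0
    have heq : k + (m - k) = m := by omega
    rwa [heq] at h0
  -- the safe run from `t` tracks the layer-`l` projection of `ρ`
  have htot : ∀ m, k ≤ m → ∃ tm, A.runList t (seg w k m) = some tm ∧
      A.layer tm = l + 1 ∧ A.μ tm = A.muHat l (ρ m) := by
    intro m hm
    induction m, hm using Nat.le_induction with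
    | base => exact ⟨t, by simp, htl, hμt⟩
    | succ m hm ih =>
      obtain ⟨tm, hrun, hlay, hmu⟩ := ih
      have hnext := hsafe' (m + 1) (by omega)
      rw [seg_succ w k m hm, runList_append, hrun, Option.bind_some, runList_cons] at hnext ⊢
      cases hdlt : A.δ tm (w m) with
      | none => rw [hdlt] at hnext; simp at hnext
      | some tm' =>
        refine ⟨tm', by simp [runList_nil], ?_, ?_⟩
        · rw [A.δ_layer tm (w m) tm' hdlt]; exact hlay
        · have h1 := A.μ_morph tm (w m) tm' (by omega) hdlt
          have h2 := A.semStep_proj (hρ.2 m) hl1 (hge m (by omega))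
          rw [hmu] at h1
          rw [h1] at h2
          exact (Option.some.injEq _ _).mp h2
  -- the run `ρ` stays in layers `> l` after `k`
  have hlayρ : ∀ m, k ≤ m → l + 1 ≤ A.layer (ρ m) := by
    intro m hm
    obtain ⟨tm, _, hlay, hmu⟩ := htot m hm
    by_contra hc
    push_neg at hc
    rw [A.muHat_of_le (by omega)] at hmu
    exact run_leaf hq hρ m tm (by omega) hmu
  -- the bound `B` after which partial runs with suffix start `≤ k` have died
  set F : ℕ × Q → ℕ := fun sp =>
    if h : ∃ m'', A.runList sp.2 (seg w sp.1 m'') = none then Nat.find h else 0 with hF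
  set B : ℕ := Finset.sup ((Finset.range (k + 1)) ×ˢ (Finset.univ : Finset Q)) F with hB
  have hBtot : ∀ s, s ≤ k → ∀ (p : Q) (m : ℕ), B ≤ m →
      (A.runList p (seg w s m)).isSome → ∀ m', (A.runList p (seg w s m')).isSome := by
    intro s hs p m hBm hsome m'
    by_cases hdies : ∃ m'', A.runList p (seg w s m'') = none
    · exfalso
      have hfind := Nat.find_spec hdies
      have hm₀B : Nat.find hdies ≤ B := by
        have hmem : (s, p) ∈ (Finset.range (k + 1)) ×ˢ (Finset.univ : Finset Q) := by
          simp [Finset.mem_product, Finset.mem_range]; omega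
        have hle := Finset.le_sup (f := F) hmem
        rw [hF] at hle
        simp only [dif_pos hdies] at hle
        exact hle
      have hsm₀ : s < Nat.find hdies := by
        by_contra hc
        push_neg at hc
        have hnil : seg w s (Nat.find hdies) = [] := by
          have h0 : Nat.find hdies - s = 0 := by omega
          exact List.eq_nil_of_length_eq_zero (by rw [seg_length]; exact h0)
        rw [hnil] at hfind
        simp at hfind
      have hsplit : seg w s m = seg w s (Nat.find hdies) ++ seg w (Nat.find hdies) m :=
        (seg_append w s (Nat.find hdies) m (by omega) (by omega)).symm
      rw [hsplit, runList_append, hfind] at hsome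
      simp at hsome
    · push_neg at hdies
      exact Option.ne_none_iff_isSome.mp (hdies m')
  -- pick a priority-`l` step `j` beyond `k`, `n₀` and `B`
  obtain ⟨j, hjge, hπj⟩ := hio (max (max (k + 1) n₀) B)
  have hjk : k + 1 ≤ j := le_trans (le_max_left _ _) (le_trans (le_max_left _ _) hjge)
  have hjn₀ : n₀ ≤ j := le_trans (le_max_right _ _) (le_trans (le_max_left _ _) hjge)
  have hjB : B ≤ j := le_trans (le_max_right _ _) hjge
  -- the leaf above the safe run is a valid successor at step `j`
  obtain ⟨tm1, hruntm1, hlaytm1, hmutm1⟩ := htot (j + 1) (by omega)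
  obtain ⟨lf, hlf, hlfle, hlfmu⟩ := A.leaf_above tm1
  rw [hlaytm1] at hlfle hlfmu
  have hstep_l : A.δ (A.muHat l (ρ j)) (w j) = some (A.muHat l (ρ (j + 1))) :=
    A.semStep_proj (hρ.2 j) hl1 (by rw [hπj])
  have hsemlf : A.semStep (ρ j) (w j) lf := by
    refine ⟨hlf, ?_⟩
    rw [hπj]
    have hh : A.muHat l lf = A.muHat l (ρ (j + 1)) := by
      have h1 : A.muHat l lf = A.μ (A.muHat (l + 1) lf) := A.muHat_step (by omega)
      rw [h1, hlfmu, hmutm1]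
    rw [hh]
    exact hstep_l
  -- the longest-suffix property forces a long suffix to `μ̂_{l+1} (ρ (j+1))`
  have hlen : (wordPrefix w (j + 1)).length = j + 1 := by simp [wordPrefix]
  have hLB : j + 1 - k ≤ A.longestSuffixLen (wordPrefix w (j + 1)) tm1 := by
    apply Nat.le_findGreatest (by rw [hlen]; omega)
    refine ⟨by rw [hlen]; omega, ?_⟩
    rw [hlen]
    have hdk : j + 1 - (j + 1 - k) = k := by omega
    rw [hdk, wordPrefix_eq_seg, drop_seg w k (j + 1) (by omega)]
    exact ⟨t, by rw [htl, hlaytm1], hruntm1⟩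
  have hcmp := hres j hjn₀ hπj lf hsemlf
  rw [hlfmu] at hcmp
  have hL1 : j + 1 - k ≤ A.longestSuffixLen (wordPrefix w (j + 1)) (A.muHat (l + 1) (ρ (j + 1))) :=
    le_trans hLB hcmp
  have hLpos : A.longestSuffixLen (wordPrefix w (j + 1)) (A.muHat (l + 1) (ρ (j + 1))) ≠ 0 := by
    omega
  have hPL := (Nat.findGreatest_eq_iff.mp
    (rfl : A.longestSuffixLen (wordPrefix w (j + 1)) (A.muHat (l + 1) (ρ (j + 1))) = _)).2.1 hLpos
  set L := A.longestSuffixLen (wordPrefix w (j + 1)) (A.muHat (l + 1) (ρ (j + 1))) with hLdef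
  obtain ⟨hLle, p', hp'layer, hp'run⟩ := hPL
  rw [hlen] at hLle
  rw [hlen, wordPrefix_eq_seg, drop_seg w (j + 1 - L) (j + 1) (by omega)] at hp'run
  set s := j + 1 - L with hs
  have hsk : s ≤ k := by omega
  -- the witness run from `p'` is total
  have htotp : ∀ m', (A.runList p' (seg w s m')).isSome :=
    hBtot s hsk p' (j + 1) (by omega) (by rw [hp'run]; rfl)
  -- the next priority-`l` step
  have hnext : ∃ j', (j + 1 ≤ j' ∧ A.layerOf (ρ j') (w j') = l) := hio (j + 1)
  have hj'spec := Nat.find_spec hnext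
  set j' := Nat.find hnext with hj'def
  have hj'min : ∀ m, j + 1 ≤ m → m < j' → A.layerOf (ρ m) (w m) ≠ l := by
    intro m h1 h2 heq
    exact Nat.find_min hnext h2 ⟨h1, heq⟩
  -- sync the witness run with `μ̂_{l+1} ρ` up to `j'`
  have hsync : ∀ m, j + 1 ≤ m → m ≤ j' → A.runList p' (seg w s m) = some (A.muHat (l + 1) (ρ m)) := by
    intro m hm1
    induction m, hm1 using Nat.le_induction with
    | base => intro _; exact hp'run
    | succ m hm ih =>
      intro hm2
      have hπm : l + 1 ≤ A.layerOf (ρ m) (w m) := by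
        have hge' := hge m (by omega)
        have hne := hj'min m (by omega) (by omega)
        omega
      rw [seg_succ w s m (by omega), runList_append, ih (by omega), Option.bind_some,
        runList_cons, A.semStep_proj (hρ.2 m) (by omega) hπm]
      simp [runList_nil]
  -- contradiction: `δ_{l+1}` is defined at step `j'` although its priority is `l`
  have h1 := htotp (j' + 1)
  rw [seg_succ w s j' (by omega), runList_append, hsync j' hj'spec.1 le_rfl,
    Option.bind_some, runList_cons] at h1
  have hδ : (A.δ (A.muHat (l + 1) (ρ j')) (w j')).isSome := by
    cases hx : A.δ (A.muHat (l + 1) (ρ j')) (w j') with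
    | none => rw [hx] at h1; simp at h1
    | some _ => rfl
  have hfinal := A.le_layerOf (hlayρ j' (by omega)) hδ
  rw [hj'spec.2] at hfinal
  omega

end Layered

end Core

section Outer

namespace Layered

variable {Q α : Type} {d : ℕ}

/-- No state of layer `l+1` above the projected run is safe for the remaining word. -/
lemma run_no_escape [Fintype Q] {A : Layered Q α d} {w : ℕ → α} {q : Q} {ρ : ℕ → Q}
    (hq : A.IsLeaf q) (hρ : A.IsSemRun w q ρ) {l n₀ : ℕ} (hl1 : 1 ≤ l)
    (hge : ∀ i, n₀ ≤ i → l ≤ A.layerOf (ρ i) (w i))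
    (hio : ∀ N, ∃ j, N ≤ j ∧ A.layerOf (ρ j) (w j) = l)
    (hres : ∀ j, n₀ ≤ j → A.layerOf (ρ j) (w j) = l → ∀ q', A.semStep (ρ j) (w j) q' →
      A.longestSuffixLen (wordPrefix w (j+1)) (A.muHat (l+1) q') ≤
      A.longestSuffixLen (wordPrefix w (j+1)) (A.muHat (l+1) (ρ (j+1)))) :
    ∀ N, n₀ ≤ N → ∀ (n : ℕ) (p' : Q), A.layer p' = l + 1 →
      A.runList (A.muHat l (ρ N)) (wordPrefix (wordDrop w N) n) = some (A.μ p') →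
      ¬ A.SafeInf (l + 1) p' (wordDrop w (N + n)) := by
  intro N hN n p' hlay hrun hsafe
  refine core hq hρ hl1 hge hio hres (k := N + n) (t := p') (by omega) hlay ?_ hsafe
  have hrs := run_seg hρ hl1 (N := N) (fun i hi => hge i (by omega)) (N + n) (by omega)
  rw [wordPrefix_wordDrop] at hrun
  rw [hrun] at hrs
  exact (Option.some.injEq _ _).mp hrs

/-- From the maximal ultimately-safe layer we extract, at every late enough position,
a state with no escape to the next layer. -/
lemma ult_strong {A : Layered Q α d} {w : ℕ → α} {q0 : Q} {x : ℕ} (hx1 : 1 ≤ x)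
    (hult : A.UltSafeFrom q0 x w) (hmax : ∀ y, A.UltSafeFrom q0 y w → y ≤ x) :
    ∃ nstar : ℕ, ∀ N, nstar ≤ N → ∃ pN : Q, A.layer pN = x ∧
      A.runList q0 (seg w 0 N) = some (A.muHat 1 pN) ∧
      A.SafeInf x pN (wordDrop w N) ∧
      ∀ (n : ℕ) (p' : Q), A.layer p' = x + 1 →
        A.runList pN (wordPrefix (wordDrop w N) n) = some (A.μ p') →
        ¬ A.SafeInf (x + 1) p' (wordDrop w (N + n)) := by
  obtain ⟨ns, p, hpl, hrun, hsafe⟩ := hult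
  refine ⟨ns, fun N hN => ?_⟩
  have hmu : A.muHat x p = p := A.muHat_of_le (le_of_eq hpl)
  have hsafe' : ∀ m, ns ≤ m → (A.runList p (seg w ns m)).isSome = true := by
    intro m hm
    have h0 := hsafe (m - ns)
    unfold SafeFin at h0
    rw [wordPrefix_wordDrop, hmu] at h0
    have heq : ns + (m - ns) = m := by omega
    rwa [heq] at h0
  obtain ⟨pN, hpN⟩ := Option.isSome_iff_exists.mp (hsafe' N hN)
  have hpNl : A.layer pN = x := by rw [A.runList_layer hpN, hpl]
  have hq0run : A.runList q0 (seg w 0 N) = some (A.muHat 1 pN) := by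
    have hproj : A.runList (A.muHat 1 p) (seg w ns N) = some (A.muHat 1 pN) :=
      A.runList_muHat hpN le_rfl (by omega)
    rw [← seg_append w 0 ns N (by omega) hN, runList_append, ← wordPrefix_eq_seg, hrun,
      Option.bind_some]
    exact hproj
  refine ⟨pN, hpNl, hq0run, ?_, ?_⟩
  · intro n
    unfold SafeFin
    rw [A.muHat_of_le (le_of_eq hpNl), wordPrefix_wordDrop]
    have hsplit := hsafe' (N + n) (by omega)
    rw [← seg_append w ns N (N + n) hN (by omega), runList_append, hpN, Option.bind_some] at hsplit
    exact hsplit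
  · intro n p' hlay' hrun' hsafe''
    have habs : A.UltSafeFrom q0 (x + 1) w := by
      refine ⟨N + n, p', hlay', ?_, hsafe''⟩
      rw [wordPrefix_wordDrop] at hrun'
      have hproj : A.runList (A.muHat 1 pN) (seg w N (N + n)) = some (A.muHat 1 (A.μ p')) :=
        A.runList_muHat hrun' le_rfl (by omega)
      rw [A.muHat_one_mu (by omega : 1 < A.layer p')] at hproj
      rw [wordPrefix_eq_seg, ← seg_append w 0 N (N + n) (by omega) (by omega), runList_append,
        hq0run, Option.bind_some]
      exact hproj
    have := hmax (x + 1) habs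
    omega

end Layered

end Outer

section Final

namespace Layered

variable {Q α : Type} {d : ℕ}

lemma final_contra [Fintype Q] {A : Layered Q α d} {w : ℕ → α} {q : Q} {ρ : ℕ → Q}
    (hcons : A.Consistent) (hq : A.IsLeaf q) (hρ : A.IsSemRun w q ρ)
    {l n₀ x : ℕ} (hl1 : 1 ≤ l) (hx1 : 1 ≤ x)
    (hge : ∀ i, n₀ ≤ i → l ≤ A.layerOf (ρ i) (w i))
    (hio : ∀ N, ∃ j, N ≤ j ∧ A.layerOf (ρ j) (w j) = l)
    (hres : ∀ j, n₀ ≤ j → A.layerOf (ρ j) (w j) = l → ∀ q', A.semStep (ρ j) (w j) q' →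
      A.longestSuffixLen (wordPrefix w (j+1)) (A.muHat (l+1) q') ≤
      A.longestSuffixLen (wordPrefix w (j+1)) (A.muHat (l+1) (ρ (j+1))))
    (hult : A.UltSafeFrom (A.muHat 1 q) x w)
    (hmax : ∀ y, A.UltSafeFrom (A.muHat 1 q) y w → y ≤ x)
    (hpar : (Odd l ∧ Even x) ∨ (Even l ∧ Odd x)) : False := by
  obtain ⟨nstar, hstrong⟩ := ult_strong hx1 hult hmax
  set N := max n₀ nstar with hN
  obtain ⟨pN, hpNl, hq0run, hpNsafe, hpNnoesc⟩ := hstrong N (le_max_right _ _)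
  have hT1 : A.runList (A.muHat 1 q) (seg w 0 N) = some (A.muHat 1 (ρ N)) := by
    have h0 := run_seg hρ le_rfl (N := 0)
      (fun i _ => A.one_le_layerOf (ρ i) (w i)) N (Nat.zero_le N)
    rwa [hρ.1] at h0
  have hmu1 : A.muHat 1 pN = A.muHat 1 (ρ N) := by
    rw [hq0run] at hT1
    exact (Option.some.injEq _ _).mp hT1
  have hlN : l ≤ A.layer (ρ N) := le_trans (hge N (le_max_left _ _)) (A.layerOf_le_layer _ _)
  have hcNl : A.layer (A.muHat l (ρ N)) = l := A.layer_muHat hl1 hlN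
  have hmu1c : A.muHat 1 (A.muHat l (ρ N)) = A.muHat 1 (ρ N) := A.muHat_muHat le_rfl hl1 hlN
  have hcsafe : A.SafeInf l (A.muHat l (ρ N)) (wordDrop w N) := by
    intro n
    unfold SafeFin
    rw [A.muHat_of_le (le_of_eq hcNl), wordPrefix_wordDrop]
    rw [run_seg hρ hl1 (N := N) (fun i hi => hge i (le_trans (le_max_left _ _) hi))
      (N + n) (by omega)]
    rfl
  have hnoesc := run_no_escape hq hρ hl1 hge hio hres N (le_max_left _ _)
  have hpNsafe' : A.SafeInf (A.layer pN) pN (wordDrop w N) := by rw [hpNl]; exact hpNsafe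
  have hpNnoesc' : ∀ (n : ℕ) (p' : Q), A.layer p' = A.layer pN + 1 →
      A.runList pN (wordPrefix (wordDrop w N) n) = some (A.μ p') →
      ¬ A.SafeInf (A.layer p') p' (wordDrop (wordDrop w N) n) := by
    intro n p' h1 h2
    rw [hpNl] at h1
    rw [wordDrop_wordDrop, h1]
    exact hpNnoesc n p' h1 h2
  have hcsafe' : A.SafeInf (A.layer (A.muHat l (ρ N))) (A.muHat l (ρ N)) (wordDrop w N) := by
    rw [hcNl]; exact hcsafe
  have hcnoesc' : ∀ (n : ℕ) (p' : Q), A.layer p' = A.layer (A.muHat l (ρ N)) + 1 →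
      A.runList (A.muHat l (ρ N)) (wordPrefix (wordDrop w N) n) = some (A.μ p') →
      ¬ A.SafeInf (A.layer p') p' (wordDrop (wordDrop w N) n) := by
    intro n p' h1 h2
    rw [hcNl] at h1
    rw [wordDrop_wordDrop, h1]
    exact hnoesc n p' h1 h2
  rcases hpar with ⟨hodd, hevenx⟩ | ⟨heven, hoddx⟩
  · exact hcons ⟨pN, A.muHat l (ρ N), wordDrop w N,
      hmu1.trans hmu1c.symm,
      ⟨by rw [hpNl]; exact hevenx, hpNsafe', hpNnoesc'⟩,
      ⟨by rw [hcNl]; exact hodd, hcsafe', hcnoesc'⟩⟩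
  · exact hcons ⟨A.muHat l (ρ N), pN, wordDrop w N,
      hmu1c.trans hmu1.symm,
      ⟨by rw [hcNl]; exact heven, hcsafe', hcnoesc'⟩,
      ⟨by rw [hpNl]; exact hoddx, hpNsafe', hpNnoesc'⟩⟩

end Layered

end Final
/-- Let `A` be consistent, `q` a leaf state and `σ`, `τ` longest suffix
resolvers for Eve and Adam in `⟦A⟧`.  If `w` is accepted under layered acceptance by `A`
with initial state `μ̂₁ q`, then every `σ`-run of `⟦A⟧` over `w` from `q` satisfies parity;
symmetrically, if `w` is rejected then every `τ`-run over `w` from `q` fails parity. -/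
theorem statement_6 {Q α : Type} [Fintype Q] [Fintype α] [Nonempty α] {d : ℕ} (hd : 1 ≤ d)
    (A : Layered Q α d) (hcons : A.Consistent)
    (q : Q) (hq : A.IsLeaf q)
    (σ : List (Q × α) → Q → α → Q) (hσ : A.IsLongestSuffixResolverE [] σ)
    (τ : List (Q × α) → Q → α → Q) (hτ : A.IsLongestSuffixResolverA [] τ)
    (w : ℕ → α) :
    (A.LayeredAcceptFrom (A.muHat 1 q) w →
      ∀ ρ : ℕ → Q, A.IsSemRun w q ρ → A.ConsEve σ w ρ → ParityAccept (A.runPrios w ρ)) ∧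
    (A.LayeredRejectFrom (A.muHat 1 q) w →
      ∀ ρ : ℕ → Q, A.IsSemRun w q ρ → A.ConsAdam τ w ρ → ¬ ParityAccept (A.runPrios w ρ)) := by
  constructor
  · -- Eve part
    intro hacc ρ hρ hconsE
    unfold ParityAccept
    by_contra hnotev
    have hodd : Odd (minInfOften (A.runPrios w ρ)) := Nat.not_even_iff_odd.mp hnotev
    have hbd : ∀ n, A.runPrios w ρ n ≤ d :=
      fun n => le_trans (A.layerOf_le_layer _ _) (A.layer_le _)
    have hmem := minInfOften_mem hbd
    set l := minInfOften (A.runPrios w ρ) with hldef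
    have hio : ∀ N, ∃ j, N ≤ j ∧ A.layerOf (ρ j) (w j) = l := by
      intro N
      obtain ⟨n, h1, h2⟩ := hmem N
      exact ⟨n, h1, h2⟩
    have hl1 : 1 ≤ l := by
      obtain ⟨n, _, h2⟩ := hmem 0
      rw [← h2]
      exact A.one_le_layerOf _ _
    obtain ⟨n₀, hge⟩ := minInfOften_eventually_ge hbd
    have hres : ∀ j, n₀ ≤ j → A.layerOf (ρ j) (w j) = l →
        ∀ q', A.semStep (ρ j) (w j) q' →
        A.longestSuffixLen (wordPrefix w (j+1)) (A.muHat (l+1) q') ≤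
        A.longestSuffixLen (wordPrefix w (j+1)) (A.muHat (l+1) (ρ (j+1))) := by
      intro j _ hπj q' hstep
      have hoddj : Odd (A.semPrio (ρ j) (w j)) := by
        rw [A.semPrio_eq, hπj]
        exact hodd
      have hchoice := hconsE j hoddj
      have hineq := hσ.2 (List.ofFn fun j' : Fin j => (ρ j', w j')) (ρ j) (w j) hoddj q' hstep
      have hmap : (List.map Prod.snd (List.ofFn fun j' : Fin j => (ρ j', w j')))
          = wordPrefix w j := by
        rw [List.map_ofFn]
        rfl
      simp only [List.nil_append] at hineq
      rw [hmap] at hineq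
      have hpre : wordPrefix w j ++ [w j] = wordPrefix w (j + 1) := by
        rw [Layered.wordPrefix_eq_seg, Layered.wordPrefix_eq_seg, Layered.seg_succ w 0 j (by omega)]
      rw [hpre] at hineq
      have hsp : A.semPrio (ρ j) (w j) = l := hπj
      rw [hsp, ← hchoice] at hineq
      exact hineq
    obtain ⟨x, hxev, hult, hmax⟩ := hacc
    have hx1 : 1 ≤ x := by
      obtain ⟨n, p, hpl, _, _⟩ := hult
      rw [← hpl]
      exact A.layer_pos p
    exact Layered.final_contra hcons hq hρ hl1 hx1 hge hio hres hult hmax (Or.inl ⟨hodd, hxev⟩)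
  · -- Adam part
    intro hrej ρ hρ hconsA hpar
    have heven : Even (minInfOften (A.runPrios w ρ)) := hpar
    have hbd : ∀ n, A.runPrios w ρ n ≤ d :=
      fun n => le_trans (A.layerOf_le_layer _ _) (A.layer_le _)
    have hmem := minInfOften_mem hbd
    set l := minInfOften (A.runPrios w ρ) with hldef
    have hio : ∀ N, ∃ j, N ≤ j ∧ A.layerOf (ρ j) (w j) = l := by
      intro N
      obtain ⟨n, h1, h2⟩ := hmem N
      exact ⟨n, h1, h2⟩
    have hl1 : 1 ≤ l := by
      obtain ⟨n, _, h2⟩ := hmem 0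
      rw [← h2]
      exact A.one_le_layerOf _ _
    obtain ⟨n₀, hge⟩ := minInfOften_eventually_ge hbd
    have hres : ∀ j, n₀ ≤ j → A.layerOf (ρ j) (w j) = l →
        ∀ q', A.semStep (ρ j) (w j) q' →
        A.longestSuffixLen (wordPrefix w (j+1)) (A.muHat (l+1) q') ≤
        A.longestSuffixLen (wordPrefix w (j+1)) (A.muHat (l+1) (ρ (j+1))) := by
      intro j _ hπj q' hstep
      have hevj : Even (A.semPrio (ρ j) (w j)) := by
        rw [A.semPrio_eq, hπj]
        exact heven
      have hchoice := hconsA j hevj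
      have hineq := hτ.2 (List.ofFn fun j' : Fin j => (ρ j', w j')) (ρ j) (w j) hevj q' hstep
      have hmap : (List.map Prod.snd (List.ofFn fun j' : Fin j => (ρ j', w j')))
          = wordPrefix w j := by
        rw [List.map_ofFn]
        rfl
      simp only [List.nil_append] at hineq
      rw [hmap] at hineq
      have hpre : wordPrefix w j ++ [w j] = wordPrefix w (j + 1) := by
        rw [Layered.wordPrefix_eq_seg, Layered.wordPrefix_eq_seg, Layered.seg_succ w 0 j (by omega)]
      rw [hpre] at hineq
      have hsp : A.semPrio (ρ j) (w j) = l := hπj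
      rw [hsp, ← hchoice] at hineq
      exact hineq
    obtain ⟨x, hxodd, hult, hmax⟩ := hrej
    have hx1 : 1 ≤ x := by
      obtain ⟨n, p, hpl, _, _⟩ := hult
      rw [← hpl]
      exact A.layer_pos p
    exact Layered.final_contra hcons hq hρ hl1 hx1 hge hio hres hult hmax (Or.inr ⟨heven, hxodd⟩)
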